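/- Let L/K be a Galois field extension of degree 2 with nontrivial automorphism σ, and let A be an invertible n×n matrix over L satisfying A^σ · A = 1 (i.e. A^σ = A^{-1}). Then there exists an invertible n×n matrix B over L such that A = B^σ · B^{-1}. -/

import Mathlib

/-- **Hilbert's Theorem 90, matrix form (existence).**
Let `L/K` be a Galois field extension of degree 2 with nontrivial automorphism `σ`,
and let `A` be an invertible `n × n` matrix over `L` satisfying `A^σ · A = 1`
(i.e. `A^σ = A⁻¹`).  Then there exists an invertible `n × n` matrix `B` over `L`
such that `A = B^σ · B⁻¹`. -/
theorem hilbert90_matrix_existence {K L : Type*} [Field K] [Field L] [Algebra K L]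
    [IsGalois K L] (hdeg : Module.finrank K L = 2)
    (σ : L ≃ₐ[K] L) (hσ : σ ≠ 1)
    {n : ℕ} (A : Matrix (Fin n) (Fin n) L) (hA : IsUnit A)
    (hcoc : A.map σ * A = 1) :
    ∃ B : Matrix (Fin n) (Fin n) L, IsUnit B ∧ A = B.map σ * B⁻¹ := by
  classical
  -- σ is an involution
  have hfd : FiniteDimensional K L := Module.finite_of_finrank_pos (by omega)
  have hcard : Fintype.card (L ≃ₐ[K] L) = 2 := by
    rw [← Nat.card_eq_fintype_card, IsGalois.card_aut_eq_finrank, hdeg]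
  have hσ2 : ∀ x : L, σ (σ x) = x := by
    intro x
    have h : σ ^ 2 = 1 := by rw [← hcard]; exact pow_card_eq_one
    calc σ (σ x) = (σ * σ) x := rfl
    _ = (σ ^ 2) x := by rw [sq]
    _ = x := by rw [h]; rfl
  -- an element not fixed by σ
  obtain ⟨α, hα⟩ : ∃ α : L, σ α ≠ α := by
    by_contra h
    push_neg at h
    exact hσ (AlgEquiv.ext h)
  have hAA : A * A.map σ = 1 := mul_eq_one_comm.mp hcoc
  -- semilinearity lemmas
  have hmap : ∀ w : Fin n → L, (σ ∘ A.mulVec w) = (A.map σ).mulVec (σ ∘ w) := by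
    intro w
    funext i
    simp [Matrix.mulVec, dotProduct, Function.comp, map_sum, map_mul]
  set S : Set (Fin n → L) := {v | A.mulVec (σ ∘ v) = v} with hS
  have hsmul : ∀ (c : L) (w : Fin n → L),
      A.mulVec (σ ∘ (c • w)) = σ c • A.mulVec (σ ∘ w) := by
    intro c w
    have : (σ ∘ (c • w)) = σ c • (σ ∘ w) := by
      funext i; simp [Function.comp, map_mul]
    rw [this, Matrix.mulVec_smul]
  have hadd : ∀ (v w : Fin n → L),
      A.mulVec (σ ∘ (v + w)) = A.mulVec (σ ∘ v) + A.mulVec (σ ∘ w) := by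
    intro v w
    have : (σ ∘ (v + w)) = (σ ∘ v) + (σ ∘ w) := by
      funext i; simp [Function.comp, map_add]
    rw [this, Matrix.mulVec_add]
  have hτ2 : ∀ w : Fin n → L, A.mulVec (σ ∘ A.mulVec (σ ∘ w)) = w := by
    intro w
    rw [hmap]
    have : (σ ∘ σ ∘ w) = w := by funext i; exact hσ2 (w i)
    rw [this, Matrix.mulVec_mulVec, hAA, Matrix.one_mulVec]
  -- S spans everything
  have hspanS : Submodule.span L S = ⊤ := by
    rw [eq_top_iff]
    rintro v -
    set τv := A.mulVec (σ ∘ v) with hτv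
    have h1 : v + τv ∈ S := by
      show A.mulVec (σ ∘ (v + τv)) = v + τv
      rw [hadd, ← hτv, hτ2, add_comm]
    have h2 : α • v + σ α • τv ∈ S := by
      show A.mulVec (σ ∘ (α • v + σ α • τv)) = α • v + σ α • τv
      rw [hadd, hsmul, hsmul, ← hτv, hτ2, hσ2, add_comm]
    have hne : α - σ α ≠ 0 := sub_ne_zero.mpr (Ne.symm hα)
    have hv : v = (α - σ α)⁻¹ • ((α • v + σ α • τv) - σ α • (v + τv)) := by
      funext i
      simp only [Pi.smul_apply, Pi.add_apply, Pi.sub_apply, smul_eq_mul]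
      field_simp
      ring
    rw [hv]
    exact Submodule.smul_mem _ _ (Submodule.sub_mem _
      (Submodule.subset_span h2)
      (Submodule.smul_mem _ _ (Submodule.subset_span h1)))
  -- choose a basis inside S
  obtain ⟨t, hts, htspan, hli⟩ := exists_linearIndependent L S
  let b0 : Module.Basis t L (Fin n → L) := Module.Basis.mk hli (by
    rw [Subtype.range_coe, htspan, hspanS])
  let e : t ≃ Fin n := b0.indexEquiv (Pi.basisFun L (Fin n))
  let b : Module.Basis (Fin n) L (Fin n → L) := b0.reindex e
  have hb : ∀ j, b j ∈ S := by
    intro j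
    have : b j = ((e.symm j : t) : Fin n → L) := by
      simp [b, b0, Module.Basis.reindex_apply, Module.Basis.mk_apply]
    rw [this]
    exact hts (e.symm j).2
  -- matrices
  let P : Matrix (Fin n) (Fin n) L := Matrix.of fun i j => b j i
  have hPeq : P = (Pi.basisFun L (Fin n)).toMatrix b := by
    ext i j
    simp [P, Module.Basis.toMatrix, Pi.basisFun_repr]
  have hPunit : IsUnit P := by
    rw [hPeq]
    have := (Pi.basisFun L (Fin n)).invertibleToMatrix b
    exact isUnit_of_invertible _
  have hAP : A * P.map σ = P := by
    ext i j
    have := hb j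
    have hbj : A.mulVec (σ ∘ b j) = b j := this
    calc (A * P.map σ) i j = ∑ k, A i k * σ (b j k) := by
          simp [Matrix.mul_apply, Matrix.map_apply, P]
      _ = A.mulVec (σ ∘ b j) i := by
          simp [Matrix.mulVec, dotProduct, Function.comp]
      _ = b j i := by rw [hbj]
      _ = P i j := rfl
  have hdetP : IsUnit P.det := (Matrix.isUnit_iff_isUnit_det P).mp hPunit
  have hdet : IsUnit (P.map ⇑σ).det := by
    have h : (P.map ⇑σ).det = σ P.det := ((σ : L →+* L).map_det P).symm
    rw [h]
    exact ((map_ne_zero_iff σ σ.injective).mpr hdetP.ne_zero).isUnit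
  refine ⟨P.map σ, (Matrix.isUnit_iff_isUnit_det _).mpr hdet, ?_⟩
  · have hmapmap : (P.map σ).map σ = P := by
      rw [Matrix.map_map]
      have : ((σ : L → L) ∘ σ) = id := by funext x; exact hσ2 x
      rw [this, Matrix.map_id]
    rw [hmapmap]
    calc A = A * P.map σ * (P.map σ)⁻¹ := (Matrix.mul_nonsing_inv_cancel_right _ _ hdet).symm
      _ = P * (P.map σ)⁻¹ := by rw [hAP]
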